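/- Let n ≥ 1, let F_n be the free group on n generators, and let ρ : F_n → SL(2,ℂ) be a homomorphism whose image is contained in the set of monomial matrices (each ρ(γ) is either diagonal or antidiagonal) and has no common eigenvector. Let h₀ be the line in sl(2,ℂ) spanned by [[1,0],[0,−1]] and let h₊⊕h₋ be the subspace of sl(2,ℂ) of matrices with zero diagonal; both are invariant under the adjoint action Ad∘ρ. Then dim_ℂ H¹(F_n, h₀) = n − 1 and dim_ℂ H¹(F_n, h₊⊕h₋) = 2n − 2; consequently dim_ℂ H¹(F_n, Ad∘ρ) = 3n − 3. -/

import Mathlib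

open Matrix

/-- `sl(2,ℂ)`: the complex vector space of trace-zero `2 × 2` complex matrices. -/
noncomputable def sl2 : Submodule ℂ (Matrix (Fin 2) (Fin 2) ℂ) :=
  LinearMap.ker (Matrix.traceLinearMap (Fin 2) ℂ ℂ)

/-- `h₀`: the line in `sl(2,ℂ)` spanned by `[[1,0],[0,−1]]`. -/
noncomputable def h0 : Submodule ℂ (Matrix (Fin 2) (Fin 2) ℂ) :=
  Submodule.span ℂ {!![1, 0; 0, -1]}

/-- `h₊ ⊕ h₋`: the subspace of `sl(2,ℂ)` of matrices with zero diagonal. -/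
noncomputable def hpm : Submodule ℂ (Matrix (Fin 2) (Fin 2) ℂ) where
  carrier := {X | X 0 0 = 0 ∧ X 1 1 = 0}
  add_mem' := fun ha hb =>
    ⟨by simp [Matrix.add_apply, ha.1, hb.1], by simp [Matrix.add_apply, ha.2, hb.2]⟩
  zero_mem' := ⟨rfl, rfl⟩
  smul_mem' := fun c a ha =>
    ⟨by simp [Matrix.smul_apply, ha.1], by simp [Matrix.smul_apply, ha.2]⟩


noncomputable section
namespace AuxH1

variable {G : Type} [Group G] {V : Type} [AddCommGroup V] [Module ℂ V]

/-- The action of `G` on `Multiplicative V` induced by a representation. -/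
def φAut (σ : Representation ℂ G V) : G →* MulAut (Multiplicative V) where
  toFun g :=
    { toFun := fun v => Multiplicative.ofAdd (σ g v.toAdd)
      invFun := fun v => Multiplicative.ofAdd (σ g⁻¹ v.toAdd)
      left_inv := fun v => by
        show Multiplicative.ofAdd ((σ g⁻¹ * σ g) v.toAdd) = v
        rw [← _root_.map_mul, inv_mul_cancel, _root_.map_one]; rfl
      right_inv := fun v => by
        show Multiplicative.ofAdd ((σ g * σ g⁻¹) v.toAdd) = v
        rw [← _root_.map_mul, mul_inv_cancel, _root_.map_one]; rfl
      map_mul' := fun a b => congrArg Multiplicative.ofAdd (_root_.map_add (σ g) a.toAdd b.toAdd) }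
  map_one' := by
    ext x
    show Multiplicative.ofAdd ((σ 1) x.toAdd) = x
    rw [_root_.map_one]; rfl
  map_mul' := fun g h => by
    ext x
    show Multiplicative.ofAdd ((σ (g * h)) x.toAdd)
      = Multiplicative.ofAdd (σ g (σ h x.toAdd))
    rw [_root_.map_mul]; rfl

variable {n : ℕ}

/-- The section homomorphism into the semidirect product. -/
def ψ (σ : Representation ℂ (FreeGroup (Fin n)) V) (f : Fin n → V) :
    FreeGroup (Fin n) →* Multiplicative V ⋊[φAut σ] FreeGroup (Fin n) :=
  FreeGroup.lift fun i => ⟨Multiplicative.ofAdd (f i), FreeGroup.of i⟩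

lemma ψ_right (σ : Representation ℂ (FreeGroup (Fin n)) V) (f : Fin n → V)
    (γ : FreeGroup (Fin n)) : (ψ σ f γ).right = γ := by
  have h : (SemidirectProduct.rightHom.comp (ψ σ f)) = MonoidHom.id _ :=
    FreeGroup.ext_hom _ _ (fun i => by simp [ψ])
  exact DFunLike.congr_fun h γ

/-- Extend prescribed values on generators to a 1-cocycle. -/
def extendCocycle (σ : Representation ℂ (FreeGroup (Fin n)) V) (f : Fin n → V) :
    FreeGroup (Fin n) → V :=
  fun γ => Multiplicative.toAdd (ψ σ f γ).left

lemma extendCocycle_mul (σ : Representation ℂ (FreeGroup (Fin n)) V) (f : Fin n → V)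
    (g h : FreeGroup (Fin n)) :
    extendCocycle σ f (g * h) = σ g (extendCocycle σ f h) + extendCocycle σ f g := by
  unfold extendCocycle
  rw [_root_.map_mul, SemidirectProduct.mul_left]
  show ((ψ σ f g).left.toAdd + (φAut σ (ψ σ f g).right (ψ σ f h).left).toAdd) = _
  rw [ψ_right]
  show (ψ σ f g).left.toAdd + σ g (ψ σ f h).left.toAdd = _
  rw [add_comm]

lemma extendCocycle_of (σ : Representation ℂ (FreeGroup (Fin n)) V) (f : Fin n → V)
    (i : Fin n) : extendCocycle σ f (FreeGroup.of i) = f i := by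
  unfold extendCocycle ψ
  rw [FreeGroup.lift_apply_of]; rfl


open groupCohomology in
lemma h1_dim_free [FiniteDimensional ℂ V]
    (σ : Representation ℂ (FreeGroup (Fin n)) V)
    (hinv : ∀ v : V, (∀ γ, σ γ v = v) → v = 0) :
    Module.finrank ℂ (groupCohomology.H1 (Rep.of σ))
      = n * Module.finrank ℂ V - Module.finrank ℂ V := by
  set A := Rep.of σ with hA
  let ev : cocycles₁ A →ₗ[ℂ] (Fin n → V) :=
    { toFun := fun f i => f.1 (FreeGroup.of i)
      map_add' := fun f g => rfl
      map_smul' := fun c f => rfl }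
  have hinj : Function.Injective ev := by
    intro f g hfg
    have hsub : ∀ f : cocycles₁ A, (∀ i, f.1 (FreeGroup.of i) = 0) → f = 0 := by
      intro f hf
      have key : ∀ g : FreeGroup (Fin n), f.1 g = 0 := by
        let S : Subgroup (FreeGroup (Fin n)) :=
          { carrier := {g | f.1 g = 0}
            one_mem' := cocycles₁_map_one f
            mul_mem' := by
              intro a b ha hb
              have h2 := (mem_cocycles₁_iff f.1).1 f.2 a b
              simp only [Set.mem_setOf_eq] at *
              rw [h2, hb, ha, _root_.map_zero, zero_add]
            inv_mem' := by
              intro a ha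
              simp only [Set.mem_setOf_eq] at *
              have h2 := (mem_cocycles₁_iff f.1).1 f.2 a⁻¹ a
              rw [inv_mul_cancel] at h2
              simpa [ha] using h2.symm }
        intro g
        have hS : S = ⊤ := by
          rw [eq_top_iff, ← FreeGroup.closure_range_of]
          exact (Subgroup.closure_le S).2 (by rintro _ ⟨i, rfl⟩; exact hf i)
        have : g ∈ S := hS ▸ Subgroup.mem_top g
        exact this
      exact Subtype.ext (funext key)
    have : f - g = 0 := by
      apply hsub
      intro i
      have : ev (f - g) = 0 := by rw [_root_.map_sub, hfg, sub_self]
      exact congrFun this i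
    exact sub_eq_zero.1 this
  have hsurj : Function.Surjective ev := by
    intro f
    refine ⟨⟨extendCocycle σ f, ?_⟩, funext fun i => extendCocycle_of σ f i⟩
    rw [mem_cocycles₁_iff]
    intro g h
    exact extendCocycle_mul σ f g h
  let e : cocycles₁ A ≃ₗ[ℂ] (Fin n → V) := LinearEquiv.ofBijective ev ⟨hinj, hsurj⟩
  haveI : FiniteDimensional ℂ (cocycles₁ A) := LinearEquiv.finiteDimensional e.symm
  have hZ : Module.finrank ℂ (cocycles₁ A) = n * Module.finrank ℂ V := by
    rw [e.finrank_eq, Module.finrank_pi_fintype]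
    simp [Finset.sum_const, mul_comm]
  have hdzero : Function.Injective (d₀₁ A).hom := by
    rw [← LinearMap.ker_eq_bot, d₀₁_ker_eq_invariants]
    rw [eq_bot_iff]
    intro x hx
    rw [Representation.mem_invariants] at hx
    exact hinv x hx
  have hB : Module.finrank ℂ (LinearMap.range (shortComplexH1 A).moduleCatToCycles)
      = Module.finrank ℂ V := by
    exact LinearMap.finrank_range_of_inj
      (fun a b hab => hdzero (congrArg Subtype.val hab))
  haveI : FiniteDimensional ℂ (LinearMap.ker (shortComplexH1 A).g.hom) :=
    inferInstanceAs (FiniteDimensional ℂ (cocycles₁ A))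
  have hq : Module.finrank ℂ ((LinearMap.ker (shortComplexH1 A).g.hom) ⧸
      LinearMap.range (shortComplexH1 A).moduleCatToCycles)
      + Module.finrank ℂ (LinearMap.range (shortComplexH1 A).moduleCatToCycles)
      = Module.finrank ℂ (LinearMap.ker (shortComplexH1 A).g.hom) :=
    Submodule.finrank_quotient_add_finrank _
  have hZ' : Module.finrank ℂ (LinearMap.ker (shortComplexH1 A).g.hom)
      = n * Module.finrank ℂ V := hZ
  rw [hB, hZ'] at hq
  have : Module.finrank ℂ (groupCohomology.H1 A) + Module.finrank ℂ V
      = n * Module.finrank ℂ V := by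
    rw [(H1Iso A).toLinearEquiv.finrank_eq]; exact hq
  omega


variable {n : ℕ}

lemma det_rel (ρ : FreeGroup (Fin n) →* SpecialLinearGroup (Fin 2) ℂ) (γ : FreeGroup (Fin n)) :
    ((ρ γ : SpecialLinearGroup (Fin 2) ℂ) : Matrix (Fin 2) (Fin 2) ℂ) 0 0 *
      ((ρ γ : SpecialLinearGroup (Fin 2) ℂ) : Matrix (Fin 2) (Fin 2) ℂ) 1 1 -
    ((ρ γ : SpecialLinearGroup (Fin 2) ℂ) : Matrix (Fin 2) (Fin 2) ℂ) 0 1 *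
      ((ρ γ : SpecialLinearGroup (Fin 2) ℂ) : Matrix (Fin 2) (Fin 2) ℂ) 1 0 = 1 := by
  have := (ρ γ).prop
  rwa [Matrix.det_fin_two] at this

lemma key_eq (ρ : FreeGroup (Fin n) →* SpecialLinearGroup (Fin 2) ℂ)
    (X : Matrix (Fin 2) (Fin 2) ℂ)
    (hX : ∀ γ, ((ρ γ : SpecialLinearGroup (Fin 2) ℂ) : Matrix (Fin 2) (Fin 2) ℂ) * X *
      (((ρ γ)⁻¹ : SpecialLinearGroup (Fin 2) ℂ) : Matrix (Fin 2) (Fin 2) ℂ) = X)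
    (γ : FreeGroup (Fin n)) (i j : Fin 2) :
    (((ρ γ : SpecialLinearGroup (Fin 2) ℂ) : Matrix (Fin 2) (Fin 2) ℂ) * X *
      !![((ρ γ : SpecialLinearGroup (Fin 2) ℂ) : Matrix (Fin 2) (Fin 2) ℂ) 1 1,
         -(((ρ γ : SpecialLinearGroup (Fin 2) ℂ) : Matrix (Fin 2) (Fin 2) ℂ) 0 1);
         -(((ρ γ : SpecialLinearGroup (Fin 2) ℂ) : Matrix (Fin 2) (Fin 2) ℂ) 1 0),
         ((ρ γ : SpecialLinearGroup (Fin 2) ℂ) : Matrix (Fin 2) (Fin 2) ℂ) 0 0]) i j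
    = X i j := by
  conv_rhs => rw [← hX γ]
  have h : (((ρ γ)⁻¹ : SpecialLinearGroup (Fin 2) ℂ) : Matrix (Fin 2) (Fin 2) ℂ)
      = !![((ρ γ : SpecialLinearGroup (Fin 2) ℂ) : Matrix (Fin 2) (Fin 2) ℂ) 1 1,
         -(((ρ γ : SpecialLinearGroup (Fin 2) ℂ) : Matrix (Fin 2) (Fin 2) ℂ) 0 1);
         -(((ρ γ : SpecialLinearGroup (Fin 2) ℂ) : Matrix (Fin 2) (Fin 2) ℂ) 1 0),
         ((ρ γ : SpecialLinearGroup (Fin 2) ℂ) : Matrix (Fin 2) (Fin 2) ℂ) 0 0] := by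
    exact (Matrix.SpecialLinearGroup.coe_inv (ρ γ)).trans (Matrix.adjugate_fin_two _)
  rw [h]

lemma exists_anti (ρ : FreeGroup (Fin n) →* SpecialLinearGroup (Fin 2) ℂ)
    (hmono : ∀ γ : FreeGroup (Fin n),
      ((ρ γ : SpecialLinearGroup (Fin 2) ℂ) : Matrix (Fin 2) (Fin 2) ℂ).IsDiag ∨
      (((ρ γ : SpecialLinearGroup (Fin 2) ℂ) : Matrix (Fin 2) (Fin 2) ℂ) 0 0 = 0 ∧
       ((ρ γ : SpecialLinearGroup (Fin 2) ℂ) : Matrix (Fin 2) (Fin 2) ℂ) 1 1 = 0))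
    (hirr : ¬ ∃ v : Fin 2 → ℂ, v ≠ 0 ∧ ∀ γ : FreeGroup (Fin n),
      ∃ c : ℂ, ((ρ γ : SpecialLinearGroup (Fin 2) ℂ) : Matrix (Fin 2) (Fin 2) ℂ) *ᵥ v = c • v) :
    ∃ γ₀, ((ρ γ₀ : SpecialLinearGroup (Fin 2) ℂ) : Matrix (Fin 2) (Fin 2) ℂ) 0 0 = 0 ∧
      ((ρ γ₀ : SpecialLinearGroup (Fin 2) ℂ) : Matrix (Fin 2) (Fin 2) ℂ) 1 1 = 0 := by
  by_contra h
  push_neg at h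
  refine hirr ⟨![1, 0], fun h0 => one_ne_zero (congrFun h0 0), fun γ => ?_⟩
  rcases hmono γ with hd | ha
  · have d10 : ((ρ γ : SpecialLinearGroup (Fin 2) ℂ) : Matrix (Fin 2) (Fin 2) ℂ) 1 0 = 0 :=
      hd (by decide)
    refine ⟨((ρ γ : SpecialLinearGroup (Fin 2) ℂ) : Matrix (Fin 2) (Fin 2) ℂ) 0 0, ?_⟩
    funext i
    fin_cases i <;>
      simp [Matrix.mulVec, dotProduct, Fin.sum_univ_two, d10]
  · exact absurd ha.2 (h γ ha.1)

lemma core (ρ : FreeGroup (Fin n) →* SpecialLinearGroup (Fin 2) ℂ)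
    (hmono : ∀ γ : FreeGroup (Fin n),
      ((ρ γ : SpecialLinearGroup (Fin 2) ℂ) : Matrix (Fin 2) (Fin 2) ℂ).IsDiag ∨
      (((ρ γ : SpecialLinearGroup (Fin 2) ℂ) : Matrix (Fin 2) (Fin 2) ℂ) 0 0 = 0 ∧
       ((ρ γ : SpecialLinearGroup (Fin 2) ℂ) : Matrix (Fin 2) (Fin 2) ℂ) 1 1 = 0))
    (hirr : ¬ ∃ v : Fin 2 → ℂ, v ≠ 0 ∧ ∀ γ : FreeGroup (Fin n),
      ∃ c : ℂ, ((ρ γ : SpecialLinearGroup (Fin 2) ℂ) : Matrix (Fin 2) (Fin 2) ℂ) *ᵥ v = c • v)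
    (X : Matrix (Fin 2) (Fin 2) ℂ) (h00 : X 0 0 = 0) (h11 : X 1 1 = 0)
    (hX : ∀ γ, ((ρ γ : SpecialLinearGroup (Fin 2) ℂ) : Matrix (Fin 2) (Fin 2) ℂ) * X *
      (((ρ γ)⁻¹ : SpecialLinearGroup (Fin 2) ℂ) : Matrix (Fin 2) (Fin 2) ℂ) = X) :
    X = 0 := by
  obtain ⟨γ₀, ha0, ha1⟩ := exists_anti ρ hmono hirr
  have e10 := key_eq ρ X hX γ₀ 1 0
  simp [Matrix.mul_apply, Fin.sum_univ_two, ha0, ha1, h00, h11] at e10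
  have hb : X 0 1 = 0 := by
    by_contra hb
    apply hirr
    refine ⟨![X 0 1, Complex.I * ((ρ γ₀ : SpecialLinearGroup (Fin 2) ℂ) :
        Matrix (Fin 2) (Fin 2) ℂ) 1 0 * X 0 1],
      fun hv => hb (congrFun hv 0), fun γ => ?_⟩
    set Q := ((ρ γ₀ : SpecialLinearGroup (Fin 2) ℂ) : Matrix (Fin 2) (Fin 2) ℂ) 1 0 with hQ
    rcases hmono γ with hd | ha
    · have d10 : ((ρ γ : SpecialLinearGroup (Fin 2) ℂ) : Matrix (Fin 2) (Fin 2) ℂ) 1 0 = 0 :=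
        hd (by decide)
      have d01 : ((ρ γ : SpecialLinearGroup (Fin 2) ℂ) : Matrix (Fin 2) (Fin 2) ℂ) 0 1 = 0 :=
        hd (fun h => absurd h.symm (by decide))
      have ddet := det_rel ρ γ
      have e01 := key_eq ρ X hX γ 0 1
      simp only [Matrix.mul_apply, Fin.sum_univ_two, Matrix.cons_val_zero, Matrix.cons_val_one,
        Matrix.head_cons, Matrix.of_apply, Matrix.cons_val', Matrix.empty_val',
        Matrix.cons_val_fin_one, Matrix.vecHead, Matrix.vecTail, h00, h11, mul_zero, zero_mul, add_zero, zero_add] at e01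
      refine ⟨((ρ γ : SpecialLinearGroup (Fin 2) ℂ) : Matrix (Fin 2) (Fin 2) ℂ) 0 0, ?_⟩
      funext i
      fin_cases i <;>
        simp only [Matrix.mulVec, dotProduct, Fin.sum_univ_two, Matrix.cons_val_zero,
          Matrix.cons_val_one, Matrix.head_cons, Pi.smul_apply, smul_eq_mul, Fin.isValue,
          Fin.mk_zero, Fin.mk_one]
      · linear_combination (Complex.I * Q * X 0 1) * d01
      · linear_combination (X 0 1) * d10
          - (Complex.I * Q * ((ρ γ : SpecialLinearGroup (Fin 2) ℂ) :
              Matrix (Fin 2) (Fin 2) ℂ) 1 1) * e01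
          + (Complex.I * Q * ((ρ γ : SpecialLinearGroup (Fin 2) ℂ) :
              Matrix (Fin 2) (Fin 2) ℂ) 0 0 * X 0 1) * ddet
          + (Complex.I * Q * ((ρ γ : SpecialLinearGroup (Fin 2) ℂ) :
              Matrix (Fin 2) (Fin 2) ℂ) 0 0 * X 0 1 *
              ((ρ γ : SpecialLinearGroup (Fin 2) ℂ) : Matrix (Fin 2) (Fin 2) ℂ) 1 0) * d01
          - (Complex.I * Q * ((ρ γ : SpecialLinearGroup (Fin 2) ℂ) :
              Matrix (Fin 2) (Fin 2) ℂ) 1 1 * ((ρ γ : SpecialLinearGroup (Fin 2) ℂ) :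
              Matrix (Fin 2) (Fin 2) ℂ) 0 1 * X 1 0) * d01
    · have ddet := det_rel ρ γ
      have f10 := key_eq ρ X hX γ 1 0
      simp only [Matrix.mul_apply, Fin.sum_univ_two, Matrix.cons_val_zero, Matrix.cons_val_one,
        Matrix.head_cons, Matrix.of_apply, Matrix.cons_val', Matrix.empty_val',
        Matrix.cons_val_fin_one, Matrix.vecHead, Matrix.vecTail, h00, h11, mul_zero, zero_mul, add_zero, zero_add] at f10
      have hbb : X 0 1 * (X 0 1)⁻¹ = 1 := mul_inv_cancel₀ hb
      refine ⟨((ρ γ : SpecialLinearGroup (Fin 2) ℂ) : Matrix (Fin 2) (Fin 2) ℂ) 0 1 *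
        (Complex.I * Q * X 0 1) * (X 0 1)⁻¹, ?_⟩
      funext i
      fin_cases i <;>
        simp only [Matrix.mulVec, dotProduct, Fin.sum_univ_two, Matrix.cons_val_zero,
          Matrix.cons_val_one, Matrix.head_cons, Pi.smul_apply, smul_eq_mul, Fin.isValue,
          Fin.mk_zero, Fin.mk_one]
      · linear_combination (X 0 1) * ha.1
          - (((ρ γ : SpecialLinearGroup (Fin 2) ℂ) : Matrix (Fin 2) (Fin 2) ℂ) 0 1 *
              Complex.I * Q * X 0 1) * hbb
      · have hI : Complex.I * Complex.I = -1 := Complex.I_mul_I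
        linear_combination (-(((ρ γ : SpecialLinearGroup (Fin 2) ℂ) :
              Matrix (Fin 2) (Fin 2) ℂ) 0 1 * Q * Q * X 0 1 * X 0 1 * (X 0 1)⁻¹)) * hI
          + (((ρ γ : SpecialLinearGroup (Fin 2) ℂ) :
              Matrix (Fin 2) (Fin 2) ℂ) 0 1 * Q * Q * X 0 1) * hbb
          + (Complex.I * Q * X 0 1 - ((ρ γ : SpecialLinearGroup (Fin 2) ℂ) :
              Matrix (Fin 2) (Fin 2) ℂ) 0 1 * ((ρ γ : SpecialLinearGroup (Fin 2) ℂ) :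
              Matrix (Fin 2) (Fin 2) ℂ) 1 1 * X 1 0) * ha.2
          - (((ρ γ : SpecialLinearGroup (Fin 2) ℂ) : Matrix (Fin 2) (Fin 2) ℂ) 0 1) * e10
          + (((ρ γ : SpecialLinearGroup (Fin 2) ℂ) : Matrix (Fin 2) (Fin 2) ℂ) 0 1) * f10
          - (((ρ γ : SpecialLinearGroup (Fin 2) ℂ) : Matrix (Fin 2) (Fin 2) ℂ) 1 0 * X 0 1) * ddet
          + (((ρ γ : SpecialLinearGroup (Fin 2) ℂ) : Matrix (Fin 2) (Fin 2) ℂ) 1 1 *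
             ((ρ γ : SpecialLinearGroup (Fin 2) ℂ) : Matrix (Fin 2) (Fin 2) ℂ) 1 0 * X 0 1) * ha.1
  have hc : X 1 0 = 0 := by
    linear_combination (-1 : ℂ) * e10
      - (((ρ γ₀ : SpecialLinearGroup (Fin 2) ℂ) : Matrix (Fin 2) (Fin 2) ℂ) 1 0 *
         ((ρ γ₀ : SpecialLinearGroup (Fin 2) ℂ) : Matrix (Fin 2) (Fin 2) ℂ) 1 0) * hb
  ext i j
  fin_cases i <;> fin_cases j <;>
    simp only [Fin.mk_zero, Fin.mk_one, Matrix.zero_apply, Fin.isValue] <;>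
    assumption

lemma anti_entry (ρ : FreeGroup (Fin n) →* SpecialLinearGroup (Fin 2) ℂ)
    (X : Matrix (Fin 2) (Fin 2) ℂ)
    (hX : ∀ γ, ((ρ γ : SpecialLinearGroup (Fin 2) ℂ) : Matrix (Fin 2) (Fin 2) ℂ) * X *
      (((ρ γ)⁻¹ : SpecialLinearGroup (Fin 2) ℂ) : Matrix (Fin 2) (Fin 2) ℂ) = X)
    {γ₀ : FreeGroup (Fin n)}
    (ha0 : ((ρ γ₀ : SpecialLinearGroup (Fin 2) ℂ) : Matrix (Fin 2) (Fin 2) ℂ) 0 0 = 0)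
    (ha1 : ((ρ γ₀ : SpecialLinearGroup (Fin 2) ℂ) : Matrix (Fin 2) (Fin 2) ℂ) 1 1 = 0) :
    X 0 0 = X 1 1 := by
  have ddet := det_rel ρ γ₀
  rw [ha0, ha1] at ddet
  have e00 := key_eq ρ X hX γ₀ 0 0
  simp only [Matrix.mul_apply, Fin.sum_univ_two, Matrix.cons_val_zero, Matrix.cons_val_one,
    Matrix.head_cons, Matrix.of_apply, Matrix.cons_val', Matrix.empty_val',
    Matrix.cons_val_fin_one, Matrix.vecHead, Matrix.vecTail, ha0, ha1, mul_zero, zero_mul,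
    add_zero, zero_add] at e00
  linear_combination (-1 : ℂ) * e00 + (X 1 1) * ddet


lemma finrank_h0 : Module.finrank ℂ h0 = 1 := by
  refine finrank_span_singleton ?_
  intro h
  have := congrFun (congrFun h 0) 0
  simp at this

def hpmEquiv : hpm ≃ₗ[ℂ] (Fin 2 → ℂ) where
  toFun X := ![X.1 0 1, X.1 1 0]
  map_add' X Y := by funext i; fin_cases i <;> simp
  map_smul' c X := by funext i; fin_cases i <;> simp
  invFun p := ⟨!![0, p 0; p 1, 0], ⟨by simp, by simp⟩⟩
  left_inv X := by
    apply Subtype.ext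
    ext i j
    fin_cases i <;> fin_cases j <;> simp [X.2.1, X.2.2]
  right_inv p := by funext i; fin_cases i <;> simp

lemma finrank_hpm : Module.finrank ℂ hpm = 2 :=
  hpmEquiv.finrank_eq.trans (by simp)

lemma mem_sl2_iff (X : Matrix (Fin 2) (Fin 2) ℂ) : X ∈ sl2 ↔ X 0 0 + X 1 1 = 0 := by
  simp [sl2, LinearMap.mem_ker, Matrix.trace_fin_two]

def sl2Equiv : sl2 ≃ₗ[ℂ] (Fin 3 → ℂ) where
  toFun X := ![X.1 0 0, X.1 0 1, X.1 1 0]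
  map_add' X Y := by funext i; fin_cases i <;> simp
  map_smul' c X := by funext i; fin_cases i <;> simp
  invFun p := ⟨!![p 0, p 1; p 2, -(p 0)], by rw [mem_sl2_iff]; simp⟩
  left_inv X := by
    apply Subtype.ext
    have h2 := (mem_sl2_iff X.1).1 X.2
    ext i j
    fin_cases i <;> fin_cases j <;> simp
    linear_combination -h2
  right_inv p := by funext i; fin_cases i <;> simp

lemma finrank_sl2 : Module.finrank ℂ sl2 = 3 :=
  sl2Equiv.finrank_eq.trans (by simp)


end AuxH1
end

/-- Let `ρ : F_n → SL(2,ℂ)` (`n ≥ 1`) be a representation by monomial matrices (each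
`ρ(γ)` is diagonal or antidiagonal) with no common eigenvector. Then
`dim_ℂ H¹(F_n, h₀) = n − 1` and `dim_ℂ H¹(F_n, h₊ ⊕ h₋) = 2n − 2`; consequently
`dim_ℂ H¹(F_n, Ad ∘ ρ) = 3n − 3`. -/
theorem dim_H1_monomial
    (n : ℕ) (hn : 1 ≤ n)
    (ρ : FreeGroup (Fin n) →* SpecialLinearGroup (Fin 2) ℂ)
    (hmono : ∀ γ : FreeGroup (Fin n),
      ((ρ γ : SpecialLinearGroup (Fin 2) ℂ) : Matrix (Fin 2) (Fin 2) ℂ).IsDiag ∨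
      (((ρ γ : SpecialLinearGroup (Fin 2) ℂ) : Matrix (Fin 2) (Fin 2) ℂ) 0 0 = 0 ∧
       ((ρ γ : SpecialLinearGroup (Fin 2) ℂ) : Matrix (Fin 2) (Fin 2) ℂ) 1 1 = 0))
    (hirr : ¬ ∃ v : Fin 2 → ℂ, v ≠ 0 ∧ ∀ γ : FreeGroup (Fin n),
      ∃ c : ℂ, ((ρ γ : SpecialLinearGroup (Fin 2) ℂ) : Matrix (Fin 2) (Fin 2) ℂ) *ᵥ v = c • v)
    (σ₀ : Representation ℂ (FreeGroup (Fin n)) h0)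
    (hσ₀ : ∀ (γ : FreeGroup (Fin n)) (X : h0),
      (σ₀ γ X : Matrix (Fin 2) (Fin 2) ℂ)
        = ((ρ γ : SpecialLinearGroup (Fin 2) ℂ) : Matrix (Fin 2) (Fin 2) ℂ)
            * (X : Matrix (Fin 2) (Fin 2) ℂ)
            * (((ρ γ)⁻¹ : SpecialLinearGroup (Fin 2) ℂ) : Matrix (Fin 2) (Fin 2) ℂ))
    (σpm : Representation ℂ (FreeGroup (Fin n)) hpm)
    (hσpm : ∀ (γ : FreeGroup (Fin n)) (X : hpm),
      (σpm γ X : Matrix (Fin 2) (Fin 2) ℂ)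
        = ((ρ γ : SpecialLinearGroup (Fin 2) ℂ) : Matrix (Fin 2) (Fin 2) ℂ)
            * (X : Matrix (Fin 2) (Fin 2) ℂ)
            * (((ρ γ)⁻¹ : SpecialLinearGroup (Fin 2) ℂ) : Matrix (Fin 2) (Fin 2) ℂ))
    (σ : Representation ℂ (FreeGroup (Fin n)) sl2)
    (hσ : ∀ (γ : FreeGroup (Fin n)) (X : sl2),
      (σ γ X : Matrix (Fin 2) (Fin 2) ℂ)
        = ((ρ γ : SpecialLinearGroup (Fin 2) ℂ) : Matrix (Fin 2) (Fin 2) ℂ)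
            * (X : Matrix (Fin 2) (Fin 2) ℂ)
            * (((ρ γ)⁻¹ : SpecialLinearGroup (Fin 2) ℂ) : Matrix (Fin 2) (Fin 2) ℂ)) :
    Module.finrank ℂ (groupCohomology.H1 (Rep.of σ₀)) = n - 1 ∧
    Module.finrank ℂ (groupCohomology.H1 (Rep.of σpm)) = 2 * n - 2 ∧
    Module.finrank ℂ (groupCohomology.H1 (Rep.of σ)) = 3 * n - 3 := by
  obtain ⟨γ₀, ha0, ha1⟩ := AuxH1.exists_anti ρ hmono hirr
  have hinv0 : ∀ v : h0, (∀ γ, σ₀ γ v = v) → v = 0 := by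
    intro v hv
    have hXmat : ∀ γ, ((ρ γ : SpecialLinearGroup (Fin 2) ℂ) : Matrix (Fin 2) (Fin 2) ℂ) *
        (v : Matrix (Fin 2) (Fin 2) ℂ) *
        (((ρ γ)⁻¹ : SpecialLinearGroup (Fin 2) ℂ) : Matrix (Fin 2) (Fin 2) ℂ)
        = (v : Matrix (Fin 2) (Fin 2) ℂ) := by
      intro γ; rw [← hσ₀ γ v, hv γ]
    have h1 := AuxH1.anti_entry ρ (v : Matrix (Fin 2) (Fin 2) ℂ) hXmat ha0 ha1
    obtain ⟨c, hc⟩ := Submodule.mem_span_singleton.1 v.2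
    have e0 : (v : Matrix (Fin 2) (Fin 2) ℂ) 0 0 = c := by rw [← hc]; simp
    have e1 : (v : Matrix (Fin 2) (Fin 2) ℂ) 1 1 = -c := by rw [← hc]; simp
    rw [e0, e1] at h1
    have hc0 : c = 0 := add_self_eq_zero.mp (by linear_combination h1)
    apply Subtype.ext
    rw [← hc, hc0, zero_smul]
    rfl
  have hinvpm : ∀ v : hpm, (∀ γ, σpm γ v = v) → v = 0 := by
    intro v hv
    have hXmat : ∀ γ, ((ρ γ : SpecialLinearGroup (Fin 2) ℂ) : Matrix (Fin 2) (Fin 2) ℂ) *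
        (v : Matrix (Fin 2) (Fin 2) ℂ) *
        (((ρ γ)⁻¹ : SpecialLinearGroup (Fin 2) ℂ) : Matrix (Fin 2) (Fin 2) ℂ)
        = (v : Matrix (Fin 2) (Fin 2) ℂ) := by
      intro γ; rw [← hσpm γ v, hv γ]
    have hm : (v : Matrix (Fin 2) (Fin 2) ℂ) 0 0 = 0 ∧
        (v : Matrix (Fin 2) (Fin 2) ℂ) 1 1 = 0 := v.2
    have hz := AuxH1.core ρ hmono hirr (v : Matrix (Fin 2) (Fin 2) ℂ) hm.1 hm.2 hXmat
    apply Subtype.ext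
    rw [hz]
    rfl
  have hinvsl : ∀ v : sl2, (∀ γ, σ γ v = v) → v = 0 := by
    intro v hv
    have hXmat : ∀ γ, ((ρ γ : SpecialLinearGroup (Fin 2) ℂ) : Matrix (Fin 2) (Fin 2) ℂ) *
        (v : Matrix (Fin 2) (Fin 2) ℂ) *
        (((ρ γ)⁻¹ : SpecialLinearGroup (Fin 2) ℂ) : Matrix (Fin 2) (Fin 2) ℂ)
        = (v : Matrix (Fin 2) (Fin 2) ℂ) := by
      intro γ; rw [← hσ γ v, hv γ]
    have h1 := AuxH1.anti_entry ρ (v : Matrix (Fin 2) (Fin 2) ℂ) hXmat ha0 ha1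
    have h2 := (AuxH1.mem_sl2_iff (v : Matrix (Fin 2) (Fin 2) ℂ)).1 v.2
    have e0 : (v : Matrix (Fin 2) (Fin 2) ℂ) 0 0 = 0 := by linear_combination (h1 + h2) / 2
    have e1 : (v : Matrix (Fin 2) (Fin 2) ℂ) 1 1 = 0 := by linear_combination (h2 - h1) / 2
    have hz := AuxH1.core ρ hmono hirr (v : Matrix (Fin 2) (Fin 2) ℂ) e0 e1 hXmat
    apply Subtype.ext
    rw [hz]
    rfl
  refine ⟨?_, ?_, ?_⟩
  · rw [AuxH1.h1_dim_free σ₀ hinv0, AuxH1.finrank_h0]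
    omega
  · rw [AuxH1.h1_dim_free σpm hinvpm, AuxH1.finrank_hpm]
    omega
  · rw [AuxH1.h1_dim_free σ hinvsl, AuxH1.finrank_sl2]
    omega
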